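/- For every y ≥ 1 and every ν ∈ {0, 1, 2, 3}, one has 0 < 2 π^ν e^{−πy/4}/4^ν + 2 · 9^ν π^ν e^{−9πy/4}/4^ν < (−1)^ν ϑ₂^{(ν)}(y), where ϑ₂^{(ν)} denotes the ν-th derivative of ϑ₂. -/

import Mathlib

open Real

/-- The Jacobi theta function ϑ₂, defined for real `y` by
`ϑ₂(y) = ∑_{n ∈ ℤ} e^{−π y (n + 1/2)²}`. -/
noncomputable def theta2 (y : ℝ) : ℝ :=
  ∑' n : ℤ, Real.exp (-Real.pi * y * ((n : ℝ) + 1/2) ^ 2)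

noncomputable def gAux (k : ℕ) (y : ℝ) : ℝ :=
  ∑' n : ℤ, (Real.pi * ((n : ℝ) + 1/2) ^ 2) ^ k * Real.exp (-Real.pi * y * ((n : ℝ) + 1/2) ^ 2)

lemma c_lb (n : ℤ) : |(n : ℝ)| / 4 ≤ ((n : ℝ) + 1/2) ^ 2 := by
  rcases le_or_gt 0 (n : ℝ) with h | h
  · rw [abs_of_nonneg h]; nlinarith
  · have hn0 : n < 0 := by exact_mod_cast h
    have hn : n ≤ -1 := by omega
    have h1 : (n : ℝ) ≤ -1 := by exact_mod_cast hn
    rw [abs_of_neg h]; nlinarith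

lemma summable_aux (k : ℕ) {y : ℝ} (hy : 1/2 ≤ y) :
    Summable fun n : ℤ =>
      (Real.pi * ((n : ℝ) + 1/2) ^ 2) ^ k * Real.exp (-Real.pi * y * ((n : ℝ) + 1/2) ^ 2) := by
  have hr : Real.exp (-Real.pi / 16) < 1 := by
    rw [Real.exp_lt_one_iff]
    linarith [Real.pi_pos]
  have hsum : Summable fun n : ℤ => (4 ^ k * k.factorial : ℝ) *
      Real.exp (-Real.pi / 16) ^ n.natAbs := by
    apply Summable.mul_left
    apply Summable.of_nat_of_neg <;>
      simpa using summable_geometric_of_lt_one (Real.exp_pos _).le hr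
  apply Summable.of_nonneg_of_le (fun n => by positivity) (fun n => ?_) hsum
  set c : ℝ := ((n : ℝ) + 1/2) ^ 2 with hc
  have hc0 : 0 ≤ c := sq_nonneg _
  have h1 : (Real.pi * c) ^ k ≤ 4 ^ k * k.factorial * Real.exp (Real.pi * c / 4) := by
    have := Real.pow_div_factorial_le_exp (x := Real.pi * c / 4) (by positivity) k
    rw [div_le_iff₀ (by positivity)] at this
    calc (Real.pi * c) ^ k = (Real.pi * c / 4) ^ k * 4 ^ k := by
          rw [div_pow]; field_simp
      _ ≤ Real.exp (Real.pi * c / 4) * (k.factorial : ℝ) * 4 ^ k := by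
          gcongr
      _ = 4 ^ k * k.factorial * Real.exp (Real.pi * c / 4) := by ring
  have h2 : Real.exp (-Real.pi * y * c) ≤ Real.exp (-Real.pi * c / 2) := by
    apply Real.exp_le_exp.2
    nlinarith [mul_nonneg (mul_nonneg Real.pi_pos.le hc0) (sub_nonneg.2 hy)]
  calc (Real.pi * c) ^ k * Real.exp (-Real.pi * y * c)
      ≤ (4 ^ k * k.factorial * Real.exp (Real.pi * c / 4)) * Real.exp (-Real.pi * c / 2) := by
        apply mul_le_mul h1 h2 (Real.exp_pos _).le (by positivity)
    _ = 4 ^ k * k.factorial * Real.exp (-(Real.pi * c / 4)) := by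
        rw [mul_assoc, ← Real.exp_add]; ring_nf
    _ ≤ 4 ^ k * k.factorial * Real.exp (-Real.pi / 16) ^ n.natAbs := by
        gcongr
        rw [← Real.exp_nat_mul, Real.exp_le_exp]
        have hcl : |(n : ℝ)| / 4 ≤ c := by rw [hc]; exact c_lb n
        have habs : (n.natAbs : ℝ) = |(n : ℝ)| := by
          rw [← Int.cast_abs, Int.abs_eq_natAbs, Int.cast_natCast]
        rw [habs]
        nlinarith [mul_le_mul_of_nonneg_left hcl Real.pi_pos.le]

lemma hasDerivAt_gAux (k : ℕ) {y : ℝ} (hy : y ∈ Set.Ioi (1/2 : ℝ)) :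
    HasDerivAt (gAux k) (-(gAux (k+1) y)) y := by
  have h := hasDerivAt_tsum_of_isPreconnected
    (u := fun n : ℤ => (Real.pi * ((n : ℝ) + 1/2) ^ 2) ^ (k+1) *
      Real.exp (-Real.pi * (1/2) * ((n : ℝ) + 1/2) ^ 2))
    (g := fun (n : ℤ) (z : ℝ) => (Real.pi * ((n : ℝ) + 1/2) ^ 2) ^ k *
      Real.exp (-Real.pi * z * ((n : ℝ) + 1/2) ^ 2))
    (g' := fun (n : ℤ) (z : ℝ) => -((Real.pi * ((n : ℝ) + 1/2) ^ 2) ^ (k+1) *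
      Real.exp (-Real.pi * z * ((n : ℝ) + 1/2) ^ 2)))
    (summable_aux (k+1) le_rfl) isOpen_Ioi (isPreconnected_Ioi)
    (fun n z hz => ?_) (fun n z hz => ?_) (y₀ := 1) (by norm_num) (summable_aux k (by norm_num)) hy
  · have : (∑' n : ℤ, -((Real.pi * ((n : ℝ) + 1/2) ^ 2) ^ (k+1) *
        Real.exp (-Real.pi * y * ((n : ℝ) + 1/2) ^ 2))) = -(gAux (k+1) y) := by
      rw [tsum_neg]; rfl
    rw [this] at h
    exact h
  · -- HasDerivAt of single term
    have h1 : HasDerivAt (fun z : ℝ => -Real.pi * z * ((n : ℝ) + 1/2) ^ 2)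
        (-Real.pi * ((n : ℝ) + 1/2) ^ 2) z := by
      simpa using ((hasDerivAt_id z).const_mul (-Real.pi)).mul_const (((n : ℝ) + 1/2) ^ 2)
    have h2 := (h1.exp).const_mul ((Real.pi * ((n : ℝ) + 1/2) ^ 2) ^ k)
    convert h2 using 1
    · rfl
    ring
  · rw [Real.norm_eq_abs, abs_neg, abs_of_nonneg (by positivity)]
    apply mul_le_mul_of_nonneg_left _ (by positivity)
    apply Real.exp_le_exp.2
    nlinarith [mul_nonneg (mul_nonneg Real.pi_pos.le (sq_nonneg ((n:ℝ) + 1/2)))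
      (sub_nonneg.2 (le_of_lt (Set.mem_Ioi.mp hz)))]

lemma iteratedDeriv_theta2 (ν : ℕ) : ∀ y ∈ Set.Ioi (1/2 : ℝ),
    iteratedDeriv ν theta2 y = (-1 : ℝ) ^ ν * gAux ν y := by
  induction ν with
  | zero => intro y hy; simp [theta2, gAux]
  | succ ν ih =>
    intro y hy
    rw [iteratedDeriv_succ]
    have heq : iteratedDeriv ν theta2 =ᶠ[nhds y] fun z => (-1 : ℝ) ^ ν * gAux ν z :=
      Filter.eventuallyEq_of_mem (isOpen_Ioi.mem_nhds hy) ih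
    rw [heq.deriv_eq]
    have h := ((hasDerivAt_gAux ν hy).const_mul ((-1 : ℝ) ^ ν)).deriv
    rw [h]
    ring

theorem theta2_iteratedDeriv_lower_bound (y : ℝ) (hy : 1 ≤ y)
    (ν : ℕ) (hν : ν ∈ ({0, 1, 2, 3} : Set ℕ)) :
    0 < 2 * Real.pi ^ ν * Real.exp (-Real.pi * y / 4) / 4 ^ ν +
        2 * 9 ^ ν * Real.pi ^ ν * Real.exp (-9 * Real.pi * y / 4) / 4 ^ ν ∧
      2 * Real.pi ^ ν * Real.exp (-Real.pi * y / 4) / 4 ^ ν +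
          2 * 9 ^ ν * Real.pi ^ ν * Real.exp (-9 * Real.pi * y / 4) / 4 ^ ν <
        (-1 : ℝ) ^ ν * iteratedDeriv ν theta2 y := by
  have hy2 : y ∈ Set.Ioi (1/2 : ℝ) := Set.mem_Ioi.mpr (by linarith)
  have hid : (-1 : ℝ) ^ ν * iteratedDeriv ν theta2 y = gAux ν y := by
    rw [iteratedDeriv_theta2 ν y hy2, ← mul_assoc, ← pow_add,
      Even.neg_one_pow ⟨ν, rfl⟩, one_mul]
  refine ⟨by positivity, ?_⟩
  rw [hid]
  have hsum := summable_aux ν (show (1/2:ℝ) ≤ y by linarith)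
  have hfs := Summable.sum_le_tsum (f := fun n : ℤ =>
      (Real.pi * ((n : ℝ) + 1/2) ^ 2) ^ ν * Real.exp (-Real.pi * y * ((n : ℝ) + 1/2) ^ 2))
    ({-2, -1, 0, 1, 2} : Finset ℤ) (fun i _ => by positivity) hsum
  have hexp : ∑ n ∈ ({-2, -1, 0, 1, 2} : Finset ℤ),
      (Real.pi * ((n : ℝ) + 1/2) ^ 2) ^ ν * Real.exp (-Real.pi * y * ((n : ℝ) + 1/2) ^ 2)
      = (Real.pi * ((-2 : ℝ) + 1/2) ^ 2) ^ ν * Real.exp (-Real.pi * y * ((-2 : ℝ) + 1/2) ^ 2)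
      + (Real.pi * ((-1 : ℝ) + 1/2) ^ 2) ^ ν * Real.exp (-Real.pi * y * ((-1 : ℝ) + 1/2) ^ 2)
      + (Real.pi * ((0 : ℝ) + 1/2) ^ 2) ^ ν * Real.exp (-Real.pi * y * ((0 : ℝ) + 1/2) ^ 2)
      + (Real.pi * ((1 : ℝ) + 1/2) ^ 2) ^ ν * Real.exp (-Real.pi * y * ((1 : ℝ) + 1/2) ^ 2)
      + (Real.pi * ((2 : ℝ) + 1/2) ^ 2) ^ ν * Real.exp (-Real.pi * y * ((2 : ℝ) + 1/2) ^ 2) := by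
    norm_num [Finset.sum_insert, Finset.mem_insert, Finset.mem_singleton]
    ring
  rw [hexp] at hfs
  refine lt_of_lt_of_le ?_ (le_trans hfs (le_of_eq rfl))
  have k1 : (Real.pi * ((-2 : ℝ) + 1/2) ^ 2) ^ ν * Real.exp (-Real.pi * y * ((-2 : ℝ) + 1/2) ^ 2)
      = 9 ^ ν * Real.pi ^ ν * Real.exp (-9 * Real.pi * y / 4) / 4 ^ ν := by
    rw [show Real.pi * ((-2 : ℝ) + 1/2) ^ 2 = 9 * Real.pi / 4 by ring,
      show -Real.pi * y * ((-2 : ℝ) + 1/2) ^ 2 = -9 * Real.pi * y / 4 by ring,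
      div_pow, mul_pow]
    ring
  have k2 : (Real.pi * ((-1 : ℝ) + 1/2) ^ 2) ^ ν * Real.exp (-Real.pi * y * ((-1 : ℝ) + 1/2) ^ 2)
      = Real.pi ^ ν * Real.exp (-Real.pi * y / 4) / 4 ^ ν := by
    rw [show Real.pi * ((-1 : ℝ) + 1/2) ^ 2 = Real.pi / 4 by ring,
      show -Real.pi * y * ((-1 : ℝ) + 1/2) ^ 2 = -Real.pi * y / 4 by ring, div_pow]
    ring
  have k3 : (Real.pi * ((0 : ℝ) + 1/2) ^ 2) ^ ν * Real.exp (-Real.pi * y * ((0 : ℝ) + 1/2) ^ 2)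
      = Real.pi ^ ν * Real.exp (-Real.pi * y / 4) / 4 ^ ν := by
    rw [show Real.pi * ((0 : ℝ) + 1/2) ^ 2 = Real.pi / 4 by ring,
      show -Real.pi * y * ((0 : ℝ) + 1/2) ^ 2 = -Real.pi * y / 4 by ring, div_pow]
    ring
  have k4 : (Real.pi * ((1 : ℝ) + 1/2) ^ 2) ^ ν * Real.exp (-Real.pi * y * ((1 : ℝ) + 1/2) ^ 2)
      = 9 ^ ν * Real.pi ^ ν * Real.exp (-9 * Real.pi * y / 4) / 4 ^ ν := by
    rw [show Real.pi * ((1 : ℝ) + 1/2) ^ 2 = 9 * Real.pi / 4 by ring,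
      show -Real.pi * y * ((1 : ℝ) + 1/2) ^ 2 = -9 * Real.pi * y / 4 by ring,
      div_pow, mul_pow]
    ring
  rw [k1, k2, k3, k4]
  have hpos : 0 < (Real.pi * ((2 : ℝ) + 1/2) ^ 2) ^ ν *
      Real.exp (-Real.pi * y * ((2 : ℝ) + 1/2) ^ 2) := by positivity
  have heq : 2 * Real.pi ^ ν * Real.exp (-Real.pi * y / 4) / 4 ^ ν +
      2 * 9 ^ ν * Real.pi ^ ν * Real.exp (-9 * Real.pi * y / 4) / 4 ^ ν =
      9 ^ ν * Real.pi ^ ν * Real.exp (-9 * Real.pi * y / 4) / 4 ^ ν +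
      Real.pi ^ ν * Real.exp (-Real.pi * y / 4) / 4 ^ ν +
      Real.pi ^ ν * Real.exp (-Real.pi * y / 4) / 4 ^ ν +
      9 ^ ν * Real.pi ^ ν * Real.exp (-9 * Real.pi * y / 4) / 4 ^ ν := by ring
  rw [heq]
  exact lt_add_of_pos_right _ hpos
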